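/- Let X have continuous CDF F_X supported on a union of ordered disjoint intervals 𝒳₁,…,𝒳_L each carrying probability mass 1/L, and define g(x) = F_X(x) − (l−1)/L for x ∈ 𝒳_l. Then g maps each 𝒳_l onto (a subset of) [0, 1/L] (the images coincide up to null sets), Y = g(X) is uniformly distributed on [0, 1/L], the preimage of almost every y has exactly L elements, and the conditional law of the interval index W given Y = y is uniform on {1,…,L}; consequently H(W | Y) = log L, achieving the maximal information loss bound. -/

import Mathlib

open MeasureTheory Set Filter Topology

/-- monotone bounded-difference continuity transfer -/
lemma cont_inter_Iic (μ : Measure ℝ) [IsFiniteMeasure μ] (s : Set ℝ)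
    (hs : MeasurableSet s)
    (h : Continuous fun x => (μ (Set.Iic x)).toReal) :
    Continuous fun x => (μ (s ∩ Set.Iic x)).toReal := by
  have key : ∀ x y : ℝ, x ≤ y →
      (μ (s ∩ Set.Iic y)).toReal - (μ (s ∩ Set.Iic x)).toReal
        ≤ (μ (Set.Iic y)).toReal - (μ (Set.Iic x)).toReal ∧
      0 ≤ (μ (s ∩ Set.Iic y)).toReal - (μ (s ∩ Set.Iic x)).toReal := by
    intro x y hxy
    have hdecomp : Set.Iic y = Set.Iic x ∪ Set.Ioc x y := (Set.Iic_union_Ioc_eq_Iic hxy).symm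
    have h1 : μ (s ∩ Set.Iic y) = μ (s ∩ Set.Iic x) + μ (s ∩ Set.Ioc x y) := by
      rw [hdecomp, Set.inter_union_distrib_left]
      exact measure_union (Set.Iic_disjoint_Ioc le_rfl |>.mono Set.inter_subset_right
        Set.inter_subset_right) (hs.inter measurableSet_Ioc)
    have h2 : μ (Set.Iic y) = μ (Set.Iic x) + μ (Set.Ioc x y) := by
      rw [hdecomp]
      exact measure_union (Set.Iic_disjoint_Ioc le_rfl) measurableSet_Ioc
    have f1 : (μ (s ∩ Set.Iic y)).toReal
        = (μ (s ∩ Set.Iic x)).toReal + (μ (s ∩ Set.Ioc x y)).toReal := by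
      rw [h1, ENNReal.toReal_add (measure_ne_top _ _) (measure_ne_top _ _)]
    have f2 : (μ (Set.Iic y)).toReal = (μ (Set.Iic x)).toReal + (μ (Set.Ioc x y)).toReal := by
      rw [h2, ENNReal.toReal_add (measure_ne_top _ _) (measure_ne_top _ _)]
    have hle : (μ (s ∩ Set.Ioc x y)).toReal ≤ (μ (Set.Ioc x y)).toReal :=
      ENNReal.toReal_mono (measure_ne_top _ _) (measure_mono Set.inter_subset_right)
    constructor
    · rw [f1, f2]; linarith [ENNReal.toReal_nonneg (a := μ (s ∩ Set.Ioc x y))]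
    · rw [f1]; linarith [ENNReal.toReal_nonneg (a := μ (s ∩ Set.Ioc x y))]
  have habs : ∀ x y : ℝ,
      |(μ (s ∩ Set.Iic y)).toReal - (μ (s ∩ Set.Iic x)).toReal|
        ≤ |(μ (Set.Iic y)).toReal - (μ (Set.Iic x)).toReal| := by
    intro x y
    rcases le_total x y with hxy | hxy
    · obtain ⟨h1, h2⟩ := key x y hxy
      rw [abs_of_nonneg h2]
      exact h1.trans (le_abs_self _)
    · obtain ⟨h1, h2⟩ := key y x hxy
      rw [abs_sub_comm, abs_of_nonneg h2, abs_sub_comm]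
      exact h1.trans (le_abs_self _)
  rw [Metric.continuous_iff]
  intro x ε hε
  rw [Metric.continuous_iff] at h
  obtain ⟨δ, hδ, hcl⟩ := h x ε hε
  refine ⟨δ, hδ, fun y hy => ?_⟩
  have := hcl y hy
  simp only [Real.dist_eq] at *
  exact lt_of_le_of_lt (habs x y) this

/-- Probability-integral-transform-type lemma. -/
lemma pit (ν : Measure ℝ) [IsFiniteMeasure ν]
    (hcont : Continuous fun x => (ν (Set.Iic x)).toReal) :
    ν.map (fun x => (ν (Set.Iic x)).toReal)
      = volume.restrict (Set.Icc 0 (ν Set.univ).toReal) := by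
  set G : ℝ → ℝ := fun x => (ν (Set.Iic x)).toReal with hG
  set m : ℝ := (ν Set.univ).toReal with hm
  have hmono : Monotone G := fun x y hxy =>
    ENNReal.toReal_mono (measure_ne_top _ _) (measure_mono (Set.Iic_subset_Iic.2 hxy))
  have hmeas : Measurable G := hmono.measurable
  have hGnonneg : ∀ x, 0 ≤ G x := fun x => ENNReal.toReal_nonneg
  have hGle : ∀ x, G x ≤ m := fun x =>
    ENNReal.toReal_mono (measure_ne_top _ _) (measure_mono (Set.subset_univ _))
  have hofReal : ∀ x, ν (Set.Iic x) = ENNReal.ofReal (G x) := fun x =>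
    (ENNReal.ofReal_toReal (measure_ne_top _ _)).symm
  have hmnonneg : 0 ≤ m := ENNReal.toReal_nonneg
  have htop : Tendsto G atTop (𝓝 m) :=
    (ENNReal.tendsto_toReal (measure_ne_top ν _)).comp (tendsto_measure_Iic_atTop ν)
  have hbot : Tendsto G atBot (𝓝 0) := by
    have hempty : ⋂ x : ℝ, Set.Iic x = (∅ : Set ℝ) := by
      ext y
      simp only [Set.mem_iInter, Set.mem_Iic, Set.mem_empty_iff_false, iff_false, not_forall,
        not_le]
      exact ⟨y - 1, by linarith⟩
    have h0 : Tendsto (fun x : ℝ => ν (Set.Iic x)) atBot (𝓝 0) := by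
      have := tendsto_measure_iInter_atBot (μ := ν) (s := fun x : ℝ => Set.Iic x)
        (fun x => nullMeasurableSet_Iic) (fun x y hxy => Set.Iic_subset_Iic.2 hxy)
        ⟨0, measure_ne_top _ _⟩
      rwa [hempty, measure_empty] at this
    have := (ENNReal.tendsto_toReal (by simp : (0:ENNReal) ≠ ⊤)).comp h0
    exact this
  -- both measures finite
  have hfin : IsFiniteMeasure (volume.restrict (Set.Icc 0 m)) := by
    constructor
    rw [Measure.restrict_apply_univ]
    exact measure_Icc_lt_top
  haveI : IsFiniteMeasure (ν.map G) := Measure.isFiniteMeasure_map ν G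
  refine MeasureTheory.Measure.ext_of_Iic (ν.map G) _ fun t => ?_
  rw [Measure.map_apply hmeas measurableSet_Iic, Measure.restrict_apply measurableSet_Iic]
  have hrhs : Set.Iic t ∩ Set.Icc 0 m = Set.Icc 0 (min t m) := by
    ext z
    simp only [Set.mem_inter_iff, Set.mem_Iic, Set.mem_Icc, le_min_iff]
    tauto
  rw [hrhs, Real.volume_Icc]
  have hA : G ⁻¹' Set.Iic t = {x | G x ≤ t} := rfl
  rcases lt_or_ge t 0 with ht | ht
  · -- empty
    have : G ⁻¹' Set.Iic t = ∅ := by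
      ext x; simp only [Set.mem_preimage, Set.mem_Iic, Set.mem_empty_iff_false, iff_false, not_le]
      exact lt_of_lt_of_le ht (hGnonneg x)
    rw [this, measure_empty, ENNReal.ofReal_eq_zero.2 (by rw [sub_zero]; exact (min_le_left t m).trans ht.le)]
  rcases le_or_gt m t with htm | htm
  · -- t ≥ m : full
    have : G ⁻¹' Set.Iic t = Set.univ := by
      ext x; simp only [Set.mem_preimage, Set.mem_Iic, Set.mem_univ, iff_true]
      exact (hGle x).trans htm
    rw [this, min_eq_right htm, sub_zero, hm, ENNReal.ofReal_toReal (measure_ne_top _ _)]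
  · -- 0 ≤ t < m
    rw [min_eq_left htm.le, sub_zero]
    set A : Set ℝ := G ⁻¹' Set.Iic t with hAdef
    have hAlower : ∀ ⦃u v : ℝ⦄, u ≤ v → v ∈ A → u ∈ A := fun u v huv hv =>
      le_trans (hmono huv) hv
    have hupper : ν A ≤ ENNReal.ofReal t := by
      by_cases hbdd : BddAbove A
      · rcases Set.eq_empty_or_nonempty A with hemp | hne
        · simp [hemp]
        have hclosed : IsClosed A := IsClosed.preimage hcont isClosed_Iic
        have hcmem : sSup A ∈ A := hclosed.csSup_mem hne hbdd
        have : A ⊆ Set.Iic (sSup A) := fun x hx => le_csSup hbdd hx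
        calc ν A ≤ ν (Set.Iic (sSup A)) := measure_mono this
          _ = ENNReal.ofReal (G (sSup A)) := hofReal _
          _ ≤ ENNReal.ofReal t := ENNReal.ofReal_le_ofReal hcmem
      · -- A = univ : contradiction with t < m
        exfalso
        have hAuniv : A = Set.univ := by
          ext y
          simp only [Set.mem_univ, iff_true]
          obtain ⟨a, ha, hya⟩ := not_bddAbove_iff.1 hbdd y
          exact hAlower hya.le ha
        have : m ≤ t := by
          refine le_of_tendsto htop (Eventually.of_forall fun x => ?_)
          have : x ∈ A := hAuniv ▸ Set.mem_univ x
          exact this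
        linarith
    have hlower : ENNReal.ofReal t ≤ ν A := by
      rcases eq_or_lt_of_le ht with h0 | h0
      · simp [← h0]
      -- 0 < t < m : IVT
      obtain ⟨x₁, hx₁⟩ : ∃ x₁, G x₁ < t := (hbot.eventually_lt_const h0).exists
      obtain ⟨x₂, hx₂⟩ : ∃ x₂, t < G x₂ := (htop.eventually_const_lt htm).exists
      have hx12 : x₁ ≤ x₂ := by
        by_contra hcon
        push_neg at hcon
        exact absurd (hmono hcon.le) (not_le.2 (hx₁.trans hx₂))
      obtain ⟨a, _, ha⟩ := intermediate_value_Icc hx12 hcont.continuousOn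
        (by constructor <;> [exact hx₁.le; exact hx₂.le] : t ∈ Set.Icc (G x₁) (G x₂))
      calc ENNReal.ofReal t = ν (Set.Iic a) := by rw [hofReal, ha]
        _ ≤ ν A := measure_mono fun x hx => le_of_le_of_eq (hmono hx) ha
    exact le_antisymm hupper hlower

lemma tendsto_inter_Iic_atBot (μ : Measure ℝ) [IsFiniteMeasure μ] (s : Set ℝ)
    (hs : MeasurableSet s) :
    Tendsto (fun x => (μ (s ∩ Set.Iic x)).toReal) atBot (𝓝 0) := by
  have hempty : ⋂ x : ℝ, (s ∩ Set.Iic x) = ∅ := by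
    ext a
    simp only [Set.mem_iInter, Set.mem_inter_iff, Set.mem_Iic, Set.mem_empty_iff_false, iff_false,
      not_forall]
    exact ⟨a - 1, fun h => by linarith [h.2]⟩
  have h0 : Tendsto (fun x : ℝ => μ (s ∩ Set.Iic x)) atBot (𝓝 0) := by
    have := tendsto_measure_iInter_atBot (μ := μ) (s := fun x : ℝ => s ∩ Set.Iic x)
      (fun x => (hs.inter measurableSet_Iic).nullMeasurableSet)
      (fun x y hxy => Set.inter_subset_inter_right _ (Set.Iic_subset_Iic.2 hxy))
      ⟨0, measure_ne_top _ _⟩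
    rwa [hempty, measure_empty] at this
  have := (ENNReal.tendsto_toReal (by simp : (0:ENNReal) ≠ ⊤)).comp h0
  exact this

lemma tendsto_inter_Iic_atTop (μ : Measure ℝ) [IsFiniteMeasure μ] (s : Set ℝ)
    (hs : MeasurableSet s) :
    Tendsto (fun x => (μ (s ∩ Set.Iic x)).toReal) atTop (𝓝 (μ s).toReal) := by
  have hfull : ⋃ x : ℝ, (s ∩ Set.Iic x) = s := by
    ext a
    simp only [Set.mem_iUnion, Set.mem_inter_iff, Set.mem_Iic]
    exact ⟨fun ⟨x, hx⟩ => hx.1, fun h => ⟨a, h, le_rfl⟩⟩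
  have h0 : Tendsto (fun x : ℝ => μ (s ∩ Set.Iic x)) atTop (𝓝 (μ s)) := by
    have := tendsto_measure_iUnion_atTop (μ := μ) (s := fun x : ℝ => s ∩ Set.Iic x)
      (fun x y hxy => Set.inter_subset_inter_right _ (Set.Iic_subset_Iic.2 hxy))
    rwa [hfull] at this
  exact (ENNReal.tendsto_toReal (measure_ne_top μ s)).comp h0


open MeasureTheory ProbabilityTheory

/-- Shannon entropy of a measure on a discrete space. -/
noncomputable def mEntropy {α : Type*} [MeasurableSpace α] (ν : Measure α) : ℝ :=
  - ∑' a, (ν {a}).toReal * Real.log (ν {a}).toReal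

/-- Conditional entropy `H(W|Y) = ∫ H(W | Y = y) dP_Y(y)` of a discrete random variable
`W` given a general random variable `Y`, via the regular conditional distribution. -/
noncomputable def condEntropyDG {Ω α β : Type*} [MeasurableSpace Ω] [MeasurableSpace α]
    [StandardBorelSpace α] [Nonempty α] [MeasurableSpace β]
    (μ : Measure Ω) [IsFiniteMeasure μ] (W : Ω → α) (Y : Ω → β) : ℝ :=
  ∫ y, mEntropy (condDistrib W Y μ y) ∂(μ.map Y)

/-- if the support of `X` splits into `L` ordered disjoint intervals each of
probability `1/L` and `g(x) = F_X(x) − (l−1)/L` on the `l`-th interval, then `Y = g(X)` is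
uniform on `[0, 1/L]`, a.e. `y` has exactly one preimage in each interval, the branch index
`W` is conditionally uniform given `Y`, and `H(W|Y) = log L` (the maximal loss). -/
theorem cdf_construction_achieves_log_L
    {Ω : Type*} [MeasurableSpace Ω] (P : Measure Ω) [IsProbabilityMeasure P]
    (X : Ω → ℝ) (hX : Measurable X) (f : ℝ → ℝ)
    (hdens : P.map X = volume.withDensity fun x => ENNReal.ofReal (f x))
    (hcont : Continuous fun x => (P.map X (Set.Iic x)).toReal)
    (L : ℕ) [Nonempty (Fin L)] (S : Fin L → Set ℝ)
    (hord : ∀ i, (S i).OrdConnected)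
    (hdisj : Pairwise (Function.onFun Disjoint S))
    (hordered : ∀ i j : Fin L, i < j → ∀ x ∈ S i, ∀ y ∈ S j, x < y)
    (hsupp : ∀ x, x ∉ ⋃ i, S i → f x = 0)
    (hpos : ∀ i, ∀ x ∈ S i, 0 < f x)
    (hmass : ∀ i, P.map X (S i) = (L : ENNReal)⁻¹)
    (g : ℝ → ℝ) (hgmeas : Measurable g)
    (hg : ∀ i : Fin L, ∀ x ∈ S i,
      g x = (P.map X (Set.Iic x)).toReal - (i : ℕ) / L)
    (W : Ω → Fin L) (hWmeas : Measurable W)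
    (hW : ∀ ω i, X ω ∈ S i → W ω = i)
    (Y : Ω → ℝ) (hY : Y = fun ω => g (X ω)) :
    P.map Y = (L : ENNReal) • volume.restrict (Set.Icc 0 (1 / (L : ℝ))) ∧
      (∀ᵐ y ∂(P.map Y), ∀ i : Fin L, ∃! x, x ∈ S i ∧ g x = y) ∧
      (∀ᵐ y ∂(P.map Y), ∀ i : Fin L, condDistrib W Y P y {i} = (L : ENNReal)⁻¹) ∧
      condEntropyDG P W Y = Real.log L := by
  have hLpos : 0 < L := Fin.pos_iff_nonempty.2 ‹_›
  have hL0 : (L : ENNReal) ≠ 0 := by exact_mod_cast hLpos.ne'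
  have hLtop : (L : ENNReal) ≠ ⊤ := ENNReal.natCast_ne_top L
  have hLR : (0:ℝ) < L := by exact_mod_cast hLpos
  set μ : Measure ℝ := P.map X with hμdef
  haveI hμprob : IsProbabilityMeasure μ := Measure.isProbabilityMeasure_map hX.aemeasurable
  have hSmeas : ∀ i, MeasurableSet (S i) := fun i => (hord i).measurableSet
  have hYmeas : Measurable Y := by rw [hY]; exact hgmeas.comp hX
  have hatom : ∀ a : ℝ, μ {a} = 0 := by
    intro a
    rw [hdens, withDensity_apply _ (measurableSet_singleton a),
      Measure.restrict_eq_zero.mpr Real.volume_singleton, lintegral_zero_measure]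
  have hnull : μ (⋃ i, S i)ᶜ = 0 := by
    rw [hdens, withDensity_apply _ (MeasurableSet.iUnion fun i => hSmeas i).compl]
    rw [setLIntegral_congr_fun (MeasurableSet.iUnion fun i => hSmeas i).compl
      (fun x hx => by
        show ENNReal.ofReal (f x) = 0
        rw [hsupp x hx, ENNReal.ofReal_zero] : Set.EqOn (fun x => ENNReal.ofReal (f x))
          (fun _ => (0:ENNReal)) (⋃ i, S i)ᶜ)]
    exact lintegral_zero
  -- the per-branch cdf
  set G : Fin L → ℝ → ℝ := fun i x => (μ (S i ∩ Set.Iic x)).toReal with hGdef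
  have hGcont : ∀ i, Continuous (G i) := fun i => cont_inter_Iic μ (S i) (hSmeas i) hcont
  have hGmono : ∀ i, Monotone (G i) := fun i x y hxy =>
    ENNReal.toReal_mono (measure_ne_top _ _)
      (measure_mono (Set.inter_subset_inter_right _ (Set.Iic_subset_Iic.2 hxy)))
  -- decomposition of the cdf on branch i
  have hF : ∀ i : Fin L, ∀ x ∈ S i,
      μ (Set.Iic x) = (i : ℕ) * (L:ENNReal)⁻¹ + μ (S i ∩ Set.Iic x) := by
    intro i x hx
    have h1 : μ (Set.Iic x) = μ ((⋃ j, S j) ∩ Set.Iic x) := by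
      rw [Set.inter_comm, measure_inter_conull hnull]
    rw [h1, Set.iUnion_inter,
      measure_iUnion
        (hdisj.mono fun j k h => h.mono Set.inter_subset_left Set.inter_subset_left)
        (fun j => (hSmeas j).inter measurableSet_Iic),
      tsum_fintype]
    have hterm : ∀ j : Fin L, j ≠ i →
        μ (S j ∩ Set.Iic x) = if j < i then (L:ENNReal)⁻¹ else 0 := by
      intro j hj
      rcases lt_or_gt_of_ne hj with h | h
      · rw [if_pos h]
        have hsub : S j ∩ Set.Iic x = S j := Set.inter_eq_self_of_subset_left
          fun a ha => Set.mem_Iic.2 (hordered j i h a ha x hx).le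
        rw [hsub]
        exact hmass j
      · rw [if_neg (not_lt.2 h.le)]
        have : S j ∩ Set.Iic x = ∅ := by
          ext a
          simp only [Set.mem_inter_iff, Set.mem_Iic, Set.mem_empty_iff_false, iff_false, not_and,
            not_le]
          exact fun ha => hordered i j h x hx a ha
        rw [this, measure_empty]
    rw [← Finset.sum_erase_add _ _ (Finset.mem_univ i)]
    congr 1
    rw [Finset.sum_congr rfl fun j hj => hterm j (Finset.ne_of_mem_erase hj), ← Finset.sum_filter]
    have hfe : (Finset.univ.erase i).filter (· < i) = Finset.Iio i := by
      ext j
      constructor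
      · intro hj; exact Finset.mem_Iio.2 (Finset.mem_filter.1 hj).2
      · intro hj
        have hlt := Finset.mem_Iio.1 hj
        exact Finset.mem_filter.2 ⟨Finset.mem_erase.2 ⟨hlt.ne, Finset.mem_univ j⟩, hlt⟩
    rw [hfe, Finset.sum_const, Fin.card_Iio, nsmul_eq_mul]
  -- g agrees with the branch cdf on each branch
  have hgG : ∀ i : Fin L, ∀ x ∈ S i, g x = G i x := by
    intro i x hx
    have hFx := hF i x hx
    have hfin1 : ((i : ℕ) * (L:ENNReal)⁻¹) ≠ ⊤ :=
      ENNReal.mul_ne_top (ENNReal.natCast_ne_top _) (ENNReal.inv_ne_top.2 hL0)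
    have : (μ (Set.Iic x)).toReal = (i:ℝ) * (L:ℝ)⁻¹ + G i x := by
      rw [hFx, ENNReal.toReal_add hfin1 (measure_ne_top _ _), ENNReal.toReal_mul,
        ENNReal.toReal_inv]
      norm_num; rfl
    rw [hg i x hx, this]
    ring
  -- the key per-branch pushforward computation
  have hrEq : ∀ i, (1:ℝ) / L = ((μ.restrict (S i)) Set.univ).toReal := by
    intro i
    rw [Measure.restrict_apply_univ, hmass i, ENNReal.toReal_inv, one_div]
    norm_num
  have hpit : ∀ i : Fin L,
      (μ.restrict (S i)).map g = volume.restrict (Set.Icc 0 (1 / (L:ℝ))) := by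
    intro i
    have hres : ∀ x, (μ.restrict (S i)) (Set.Iic x) = μ (S i ∩ Set.Iic x) := fun x => by
      rw [Measure.restrict_apply measurableSet_Iic, Set.inter_comm]
    have hcontres : Continuous fun x => ((μ.restrict (S i)) (Set.Iic x)).toReal := by
      simp_rw [hres]; exact hGcont i
    have hcongr : (μ.restrict (S i)).map g
        = (μ.restrict (S i)).map (fun x => ((μ.restrict (S i)) (Set.Iic x)).toReal) := by
      refine Measure.map_congr ((ae_restrict_iff' (hSmeas i)).2 (Filter.Eventually.of_forall
        fun x hx => ?_))
      show g x = ((μ.restrict (S i)) (Set.Iic x)).toReal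
      rw [hgG i x hx, hres]
    rw [hcongr, pit _ hcontres, hrEq i]
  -- Statement 1
  have hstmt1 : P.map Y = (L : ENNReal) • volume.restrict (Set.Icc 0 (1 / (L : ℝ))) := by
    have hcomp : P.map Y = μ.map g := by
      rw [hY, hμdef, Measure.map_map hgmeas hX]; rfl
    have hμsum : μ = Measure.sum (fun i => μ.restrict (S i)) := by
      rw [← Measure.restrict_iUnion (hdisj) hSmeas,
        Measure.restrict_congr_set (MeasureTheory.ae_eq_univ.2 hnull), Measure.restrict_univ]
    rw [hcomp, hμsum, Measure.map_sum hgmeas.aemeasurable]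
    simp_rw [hpit]
    rw [Measure.sum_fintype, Finset.sum_const, Finset.card_univ, Fintype.card_fin,
      ← Nat.cast_smul_eq_nsmul ENNReal]
  -- the key joint identity
  have hnullX : P (X ⁻¹' (⋃ j, S j)ᶜ) = 0 := by
    rw [← Measure.map_apply hX (MeasurableSet.iUnion fun i => hSmeas i).compl, ← hμdef]
    exact hnull
  have hkey : ∀ (i : Fin L) (A : Set ℝ), MeasurableSet A →
      P (Y ⁻¹' A ∩ W ⁻¹' {i}) = volume.restrict (Set.Icc 0 (1/(L:ℝ))) A := by
    intro i A hA
    have hae : (Y ⁻¹' A ∩ W ⁻¹' {i} : Set Ω) =ᵐ[P] (Y ⁻¹' A ∩ X ⁻¹' (S i) : Set Ω) := by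
      rw [Filter.eventuallyEq_set]
      have h1 : ∀ ω, ω ∉ X ⁻¹' (⋃ j, S j)ᶜ →
          (ω ∈ Y ⁻¹' A ∩ W ⁻¹' {i} ↔ ω ∈ Y ⁻¹' A ∩ X ⁻¹' (S i)) := by
        intro ω hω
        simp only [Set.mem_preimage, Set.mem_compl_iff, not_not] at hω
        obtain ⟨j, hj⟩ := Set.mem_iUnion.1 hω
        simp only [Set.mem_inter_iff, Set.mem_preimage, Set.mem_singleton_iff]
        have hWω : W ω = j := hW ω j hj
        constructor
        · rintro ⟨hYA, hWi⟩
          have hji : j = i := by rw [← hWω, hWi]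
          exact ⟨hYA, hji ▸ hj⟩
        · rintro ⟨hYA, hXi⟩
          exact ⟨hYA, hW ω i hXi⟩
      have h2 : {ω | ¬ (ω ∈ Y ⁻¹' A ∩ W ⁻¹' {i} ↔ ω ∈ Y ⁻¹' A ∩ X ⁻¹' (S i))}
          ⊆ X ⁻¹' (⋃ j, S j)ᶜ := fun ω hω => by
        by_contra hc
        exact hω (h1 ω hc)
      exact measure_mono_null h2 hnullX
    rw [measure_congr hae]
    have : (Y ⁻¹' A ∩ X ⁻¹' (S i) : Set Ω) = X ⁻¹' (g ⁻¹' A ∩ S i) := by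
      rw [hY]; rfl
    rw [this, ← Measure.map_apply hX ((hgmeas hA).inter (hSmeas i))]
    show μ (g ⁻¹' A ∩ S i) = _
    rw [← Measure.restrict_apply (hgmeas hA), ← Measure.map_apply hgmeas hA, hpit i]
  have hmassR : ∀ i, (μ (S i)).toReal = 1/(L:ℝ) := by
    intro i
    rw [hmass i, ENNReal.toReal_inv, one_div]
    norm_num
  -- the uniform measure on Fin L
  set ρ : Measure (Fin L) := (L:ENNReal)⁻¹ • Measure.count with hρdef
  have hρsingle : ∀ i : Fin L, ρ {i} = (L:ENNReal)⁻¹ := by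
    intro i
    rw [hρdef, Measure.smul_apply, smul_eq_mul, Measure.count_singleton, mul_one]
  haveI hρfin : IsFiniteMeasure ρ := by
    constructor
    rw [hρdef, Measure.smul_apply, smul_eq_mul]
    have hcu : Measure.count (Set.univ : Set (Fin L)) = L := by
      rw [Measure.count_univ]
      simp
    rw [hcu, ENNReal.inv_mul_cancel hL0 hLtop]
    exact ENNReal.one_lt_top
  haveI hPYprob : IsProbabilityMeasure (P.map Y) := Measure.isProbabilityMeasure_map hYmeas.aemeasurable
  have hcompProd : P.map (fun ω => (Y ω, W ω)) = (P.map Y).compProd (Kernel.const ℝ ρ) := by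
    ext s hs
    have hsi : ∀ i : Fin L, MeasurableSet ((fun y => (y, i)) ⁻¹' s) :=
      fun i => measurable_prodMk_right hs
    have hdecomp : (fun ω => (Y ω, W ω)) ⁻¹' s
        = ⋃ i : Fin L, (Y ⁻¹' ((fun y => (y, i)) ⁻¹' s) ∩ W ⁻¹' {i}) := by
      ext ω
      simp only [Set.mem_preimage, Set.mem_iUnion, Set.mem_inter_iff, Set.mem_singleton_iff]
      exact ⟨fun h => ⟨W ω, h, rfl⟩, fun ⟨j, hj, hWj⟩ => by rw [← hWj] at hj; exact hj⟩
    have hdisjU : Pairwise (Function.onFun Disjoint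
        fun i : Fin L => (Y ⁻¹' ((fun y => (y, i)) ⁻¹' s) ∩ W ⁻¹' {i})) := by
      intro i j hij
      refine Set.disjoint_left.2 fun ω hωi hωj => hij ?_
      have h1 : W ω = i := hωi.2
      have h2 : W ω = j := hωj.2
      rw [← h1, h2]
    rw [Measure.map_apply (hYmeas.prodMk hWmeas) hs, hdecomp,
      measure_iUnion hdisjU
        (fun i => (hYmeas (hsi i)).inter (hWmeas (measurableSet_singleton i))),
      tsum_fintype]
    rw [Measure.compProd_apply hs]
    have hρapply : ∀ y : ℝ, (Kernel.const ℝ ρ) y (Prod.mk y ⁻¹' s)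
        = ∑ i : Fin L, (L:ENNReal)⁻¹ * Set.indicator ((fun y' => (y', i)) ⁻¹' s) 1 y := by
      intro y
      rw [Kernel.const_apply, hρdef, Measure.smul_apply, smul_eq_mul, Measure.count,
        Measure.sum_apply _ ((Set.to_countable _).measurableSet), tsum_fintype, Finset.mul_sum]
      refine Finset.sum_congr rfl fun i _ => ?_
      rw [Measure.dirac_apply' _ ((Set.to_countable _).measurableSet)]
      rfl
    rw [lintegral_congr hρapply, lintegral_finset_sum (Finset.univ : Finset (Fin L))
      (f := fun i y => (L:ENNReal)⁻¹ * Set.indicator ((fun y' => (y', i)) ⁻¹' s) 1 y)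
      (fun i _ => (measurable_const.mul (measurable_const.indicator (hsi i))))]
    refine Finset.sum_congr rfl fun i _ => ?_
    rw [lintegral_const_mul (f := fun y => Set.indicator ((fun y' => (y', i)) ⁻¹' s) 1 y)
      _ (measurable_const.indicator (hsi i)),
      lintegral_indicator_one (hsi i), hkey i _ (hsi i), hstmt1, Measure.smul_apply,
      smul_eq_mul, ← mul_assoc, ENNReal.inv_mul_cancel hL0 hLtop, one_mul]
  have hcd : ∀ᵐ y ∂(P.map Y), Kernel.const ℝ ρ y = condDistrib W Y P y :=
    (condDistrib_ae_eq_of_measure_eq_compProd Y hWmeas.aemeasurable hcompProd).symm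
  have hstmt3 : ∀ᵐ y ∂(P.map Y), ∀ i : Fin L, condDistrib W Y P y {i} = (L:ENNReal)⁻¹ := by
    filter_upwards [hcd] with y hy i
    rw [← hy, Kernel.const_apply, hρsingle i]
  have hstmt4 : condEntropyDG P W Y = Real.log L := by
    have hlogL : ∀ y, (∀ i : Fin L, condDistrib W Y P y {i} = (L:ENNReal)⁻¹) →
        mEntropy (condDistrib W Y P y) = Real.log L := by
      intro y hy
      have hval : ∀ i : Fin L, ((condDistrib W Y P y) {i}).toReal = (L:ℝ)⁻¹ := by
        intro i
        rw [hy i, ENNReal.toReal_inv]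
        norm_num
      rw [mEntropy, tsum_fintype, Finset.sum_congr rfl fun i _ => by rw [hval i],
        Finset.sum_const, Finset.card_univ, Fintype.card_fin, nsmul_eq_mul, Real.log_inv]
      have : (L:ℝ) ≠ 0 := ne_of_gt hLR
      field_simp
    rw [condEntropyDG, integral_congr_ae (hstmt3.mono fun y hy => hlogL y hy), integral_const,
      probReal_univ]
    simp
  -- Statement 2
  have hrange : (P.map Y) (Set.range fun q : ℚ => g (q:ℝ)) = 0 := by
    rw [hstmt1, Measure.smul_apply, smul_eq_mul]
    have h0 : volume.restrict (Set.Icc 0 (1/(L:ℝ))) (Set.range fun q : ℚ => g (q:ℝ)) = 0 :=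
      le_antisymm (le_trans (Measure.restrict_apply_le _ _)
        ((Set.countable_range fun q : ℚ => g (q:ℝ)).measure_zero volume).le) zero_le
    rw [h0, mul_zero]
  have hbd : (P.map Y) (Set.Ioo (0:ℝ) (1/(L:ℝ)))ᶜ = 0 := by
    rw [hstmt1, Measure.smul_apply, smul_eq_mul,
      Measure.restrict_apply measurableSet_Ioo.compl]
    have hsub : (Set.Ioo (0:ℝ) (1/(L:ℝ)))ᶜ ∩ Set.Icc 0 (1/(L:ℝ))
        ⊆ ({0} ∪ {1/(L:ℝ)} : Set ℝ) := by
      rintro z ⟨hz1, hz2⟩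
      simp only [Set.mem_compl_iff, Set.mem_Ioo, not_and, not_lt] at hz1
      obtain ⟨h1, h2⟩ := hz2
      rcases eq_or_lt_of_le h1 with h | h
      · exact Or.inl (by simp [← h])
      · exact Or.inr (by simp [le_antisymm h2 (hz1 h)])
    rw [measure_mono_null hsub
      (measure_union_null Real.volume_singleton Real.volume_singleton), mul_zero]
  have h1ae : ∀ᵐ y ∂(P.map Y), y ∈ Set.Ioo (0:ℝ) (1/(L:ℝ)) := by
    rw [ae_iff]
    exact hbd
  have h2ae : ∀ᵐ y ∂(P.map Y), y ∉ Set.range fun q : ℚ => g (q:ℝ) := by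
    rw [ae_iff]
    have : {y | ¬ y ∉ Set.range fun q : ℚ => g (q:ℝ)} = Set.range fun q : ℚ => g (q:ℝ) := by
      ext y
      simp [not_not]
    rw [this]
    exact hrange
  have hstmt2 : ∀ᵐ y ∂(P.map Y), ∀ i : Fin L, ∃! x, x ∈ S i ∧ g x = y := by
    filter_upwards [h1ae, h2ae] with y hy hyR i
    obtain ⟨hy0, hyL⟩ := hy
    have hSne : (S i).Nonempty := by
      rw [Set.nonempty_iff_ne_empty]
      intro h
      have h2 := hmass i
      rw [h, measure_empty] at h2
      exact (ENNReal.inv_ne_zero.2 hLtop) h2.symm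
    have hx1 : ∃ x₁ ∈ S i, G i x₁ < y := by
      by_cases hb : BddBelow (S i)
      · set c := sInf (S i) with hc
        have hc0 : G i c = 0 := by
          have hsub : S i ∩ Set.Iic c ⊆ {c} := by
            rintro a ⟨haS, hac⟩
            exact le_antisymm hac (csInf_le hb haS)
          have h2 := measure_mono_null hsub (hatom c)
          show (μ (S i ∩ Set.Iic c)).toReal = 0
          rw [h2, ENNReal.toReal_zero]
        have hcont' := (hGcont i).continuousAt (x := c)
        rw [Metric.continuousAt_iff] at hcont'
        obtain ⟨δ, hδ, hball⟩ := hcont' y hy0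
        obtain ⟨a, haS, hac⟩ := exists_lt_of_csInf_lt hSne (lt_add_of_pos_right c hδ)
        refine ⟨a, haS, ?_⟩
        have h1 : dist a c < δ := by
          rw [Real.dist_eq, abs_of_nonneg (sub_nonneg.2 (csInf_le hb haS))]
          linarith
        have h2 := hball h1
        rw [Real.dist_eq, hc0, sub_zero] at h2
        calc G i a ≤ |G i a| := le_abs_self _
          _ < y := h2
      · have htd := tendsto_inter_Iic_atBot μ (S i) (hSmeas i)
        have hev := htd.eventually_lt_const hy0
        rw [Filter.eventually_atBot] at hev
        obtain ⟨M, hM⟩ := hev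
        obtain ⟨a, haS, haM⟩ := not_bddBelow_iff.1 hb M
        exact ⟨a, haS, hM a haM.le⟩
    have hx2 : ∃ x₂ ∈ S i, y < G i x₂ := by
      by_cases hb : BddAbove (S i)
      · set c := sSup (S i) with hc
        have hc1 : G i c = 1/(L:ℝ) := by
          have hsub : S i ∩ Set.Iic c = S i :=
            Set.inter_eq_self_of_subset_left fun a ha => Set.mem_Iic.2 (le_csSup hb ha)
          show (μ (S i ∩ Set.Iic c)).toReal = 1/(L:ℝ)
          rw [hsub, hmassR i]
        have hcont' := (hGcont i).continuousAt (x := c)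
        rw [Metric.continuousAt_iff] at hcont'
        obtain ⟨δ, hδ, hball⟩ := hcont' (1/(L:ℝ) - y) (by linarith)
        obtain ⟨a, haS, hac⟩ := exists_lt_of_lt_csSup hSne (sub_lt_self c hδ)
        refine ⟨a, haS, ?_⟩
        have h1 : dist a c < δ := by
          rw [Real.dist_eq, abs_of_nonpos (sub_nonpos.2 (le_csSup hb haS))]
          linarith
        have h2 := hball h1
        rw [Real.dist_eq, hc1] at h2
        have h3 : -(G i a - 1/(L:ℝ)) ≤ |G i a - 1/(L:ℝ)| := neg_le_abs _
        linarith
      · have htd := tendsto_inter_Iic_atTop μ (S i) (hSmeas i)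
        rw [hmassR i] at htd
        have hev := htd.eventually_const_lt hyL
        rw [Filter.eventually_atTop] at hev
        obtain ⟨M, hM⟩ := hev
        obtain ⟨a, haS, haM⟩ := not_bddAbove_iff.1 hb M
        exact ⟨a, haS, hM a haM.le⟩
    obtain ⟨x₁, hx₁S, hx₁⟩ := hx1
    obtain ⟨x₂, hx₂S, hx₂⟩ := hx2
    have hx12 : x₁ ≤ x₂ := by
      by_contra h
      push_neg at h
      exact absurd (hGmono i h.le) (not_le.2 (lt_trans hx₁ hx₂))
    obtain ⟨x, hxIcc, hxval⟩ := intermediate_value_Icc hx12 (hGcont i).continuousOn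
      ⟨hx₁.le, hx₂.le⟩
    have hxS : x ∈ S i := (hord i).out hx₁S hx₂S hxIcc
    have hgx : g x = y := by rw [hgG i x hxS]; exact hxval
    refine ⟨x, ⟨hxS, hgx⟩, ?_⟩
    rintro x' ⟨hx'S, hx'val⟩
    by_contra hne
    have key : ∀ a b, a ∈ S i → b ∈ S i → g a = y → g b = y → a < b → False := by
      intro a b haS hbS hga hgb hab
      obtain ⟨q, hq1, hq2⟩ := exists_rat_btwn hab
      have hqS : (q:ℝ) ∈ S i := (hord i).out haS hbS ⟨hq1.le, hq2.le⟩
      have hgq : g (q:ℝ) = y := by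
        have hga2 : G i a = y := by rw [← hgG i a haS]; exact hga
        have hgb2 : G i b = y := by rw [← hgG i b hbS]; exact hgb
        have hq3 : G i a ≤ G i (q:ℝ) := hGmono i hq1.le
        have hq4 : G i (q:ℝ) ≤ G i b := hGmono i hq2.le
        rw [hgG i _ hqS]
        linarith
      exact hyR ⟨q, hgq⟩
    rcases lt_or_gt_of_ne hne with h | h
    · exact key x' x hx'S hxS hx'val hgx h
    · exact key x x' hxS hx'S hgx hx'val h
  exact ⟨hstmt1, hstmt2, hstmt3, hstmt4⟩
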